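/- For 0 < q < 1, the function ζ_q(s) = (1-q)^s ∑_{r=0}^∞ C(s+r-1,r) q^{s+r-1}/(1-q^{s+r-1}) has a simple pole at s = 1 with residue (q-1)/log q. -/

import Mathlib

/-- The meromorphic continuation of the `q`-zeta function:
`ζ_q(s) = (1-q)^s ∑_{r≥0} C(s+r-1,r) q^{s+r-1}/(1-q^{s+r-1})`,
where `C(s+r-1,r) = (s)_r / r!` (rising factorial). -/
noncomputable def zetaQc (q : ℝ) (s : ℂ) : ℂ :=
  (1 - (q : ℂ)) ^ s *
    ∑' r : ℕ, ((ascPochhammer ℂ r).eval s / (r.factorial : ℂ)) *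
      ((q : ℂ) ^ (s + (r : ℂ) - 1) / (1 - (q : ℂ) ^ (s + (r : ℂ) - 1)))

open Complex Filter Topology

lemma poch_norm_le (s : ℂ) (hs : ‖s‖ ≤ 2) :
    ∀ r : ℕ, ‖(ascPochhammer ℂ r).eval s‖ ≤ ((r + 1).factorial : ℝ) := by
  intro r
  induction r with
  | zero => simp
  | succ n ih =>
      rw [ascPochhammer_succ_right, Polynomial.eval_mul]
      have h1 : ‖(Polynomial.X + (n : Polynomial ℂ)).eval s‖ ≤ (n : ℝ) + 2 := by
        simp only [Polynomial.eval_add, Polynomial.eval_X, Polynomial.eval_natCast]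
        calc ‖s + (n : ℂ)‖ ≤ ‖s‖ + ‖(n : ℂ)‖ := norm_add_le _ _
          _ ≤ (n : ℝ) + 2 := by
              simp only [Complex.norm_natCast]
              linarith
      rw [norm_mul]
      calc ‖(ascPochhammer ℂ n).eval s‖ * ‖(Polynomial.X + (n : Polynomial ℂ)).eval s‖
          ≤ ((n + 1).factorial : ℝ) * ((n : ℝ) + 2) := by
            exact mul_le_mul ih h1 (norm_nonneg _) (by positivity)
        _ = ((n + 1 + 1).factorial : ℝ) := by
            rw [Nat.factorial_succ (n+1)]
            push_cast
            ring

set_option maxHeartbeats 2000000 in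
theorem stmt_3 (q : ℝ) (hq0 : 0 < q) (hq1 : q < 1) :
    Filter.Tendsto (fun s : ℂ => (s - 1) * zetaQc q s) (nhdsWithin 1 {1}ᶜ)
      (nhds (((q : ℂ) - 1) / (Real.log q : ℂ))) := by
  have hqc : (q : ℂ) ≠ 0 := by exact_mod_cast hq0.ne'
  set L : ℝ := Real.log q with hLdef
  have hLneg : L < 0 := Real.log_neg hq0 hq1
  have hLne : L ≠ 0 := hLneg.ne
  have hLc : (L : ℂ) ≠ 0 := by exact_mod_cast hLne
  have hcpow : ∀ z : ℂ, (q : ℂ) ^ z = Complex.exp ((L : ℂ) * z) := by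
    intro z
    rw [Complex.cpow_def_of_ne_zero hqc, ← Complex.ofReal_log hq0.le]
  set f : ℂ → ℕ → ℂ := fun s r =>
    (s - 1) * (((ascPochhammer ℂ r).eval s / (r.factorial : ℂ)) *
      ((q : ℂ) ^ (s + (r : ℂ) - 1) / (1 - (q : ℂ) ^ (s + (r : ℂ) - 1)))) with hf
  set g : ℕ → ℂ := fun r => if r = 0 then -((L : ℂ))⁻¹ else 0 with hg
  -- key limit for r = 0
  have hmap : Tendsto (fun s : ℂ => (L : ℂ) * (s - 1)) (nhdsWithin 1 {1}ᶜ)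
      (nhdsWithin 0 {0}ᶜ) := by
    rw [tendsto_nhdsWithin_iff]
    constructor
    · have hc : Continuous fun s : ℂ => (L : ℂ) * (s - 1) := by continuity
      have := hc.tendsto 1
      simp only [sub_self, mul_zero] at this
      exact this.mono_left nhdsWithin_le_nhds
    · filter_upwards [self_mem_nhdsWithin] with s hs
      simp only [Set.mem_compl_iff, Set.mem_singleton_iff] at hs ⊢
      exact mul_ne_zero hLc (sub_ne_zero.2 hs)
  have hslope : Tendsto (fun z : ℂ => (Complex.exp z - 1) / z) (nhdsWithin 0 {0}ᶜ)
      (nhds 1) := by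
    have h := Complex.hasDerivAt_exp 0
    rw [hasDerivAt_iff_tendsto_slope] at h
    simp only [Complex.exp_zero] at h
    exact h.congr fun z => by simp [slope_def_field]
  have h1 : Tendsto (fun s : ℂ => (Complex.exp ((L:ℂ)*(s-1)) - 1) / ((L:ℂ)*(s-1)))
      (nhdsWithin 1 {1}ᶜ) (nhds 1) := hslope.comp hmap
  have h2 : Tendsto (fun s : ℂ => (1 - Complex.exp ((L:ℂ)*(s-1))) / (s-1))
      (nhdsWithin 1 {1}ᶜ) (nhds (-(L:ℂ))) := by
    have h' := h1.const_mul (-(L:ℂ))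
    rw [mul_one] at h'
    refine h'.congr' ?_
    filter_upwards [self_mem_nhdsWithin] with s hs
    have hs1 : s - 1 ≠ 0 := sub_ne_zero.2 hs
    field_simp
    ring
  have h3 : Tendsto (fun s : ℂ => (s-1) / (1 - Complex.exp ((L:ℂ)*(s-1))))
      (nhdsWithin 1 {1}ᶜ) (nhds (-(L:ℂ))⁻¹) := by
    have := h2.inv₀ (neg_ne_zero.2 hLc)
    refine this.congr fun s => ?_
    rw [inv_div]
  have h4 : Tendsto (fun s : ℂ => Complex.exp ((L:ℂ)*(s-1))) (nhdsWithin 1 {1}ᶜ)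
      (nhds 1) := by
    have hc : Continuous fun s : ℂ => Complex.exp ((L:ℂ)*(s-1)) := by continuity
    have := hc.tendsto 1
    simp only [sub_self, mul_zero, Complex.exp_zero] at this
    exact this.mono_left nhdsWithin_le_nhds
  have key0 : Tendsto (fun s : ℂ => (s-1) *
      (Complex.exp ((L:ℂ)*(s-1)) / (1 - Complex.exp ((L:ℂ)*(s-1)))))
      (nhdsWithin 1 {1}ᶜ) (nhds (-((L:ℂ))⁻¹)) := by
    have := h3.mul h4
    rw [mul_one, inv_neg] at this
    exact this.congr fun s => by ring
  have h_lim : ∀ r : ℕ, Tendsto (fun s => f s r) (nhdsWithin 1 {1}ᶜ) (nhds (g r)) := by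
    intro r
    match r with
    | 0 =>
        have heq : (fun s : ℂ => f s 0) = fun s : ℂ => (s-1) *
            (Complex.exp ((L:ℂ)*(s-1)) / (1 - Complex.exp ((L:ℂ)*(s-1)))) := by
          funext s
          simp only [hf, hcpow, ascPochhammer_zero, Polynomial.eval_one, Nat.factorial_zero,
            Nat.cast_one, Nat.cast_zero, add_zero, div_one, one_mul]
        rw [heq, hg]
        simpa using key0
    | (r + 1) =>
        have hgr : g (r + 1) = 0 := by simp [hg]
        rw [hgr]
        have hEc : Continuous fun s : ℂ => Complex.exp ((L:ℂ)*(s + ((r:ℂ)+1) - 1)) := by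
          continuity
        have hden : 1 - Complex.exp ((L:ℂ)*((1:ℂ) + ((r:ℂ)+1) - 1)) ≠ 0 := by
          have : (L:ℂ) * ((1:ℂ) + ((r:ℂ)+1) - 1) = ((L * (r+1) : ℝ) : ℂ) := by
            push_cast; ring
          rw [this, ← Complex.ofReal_exp]
          have hlt : Real.exp (L * (r+1)) < 1 := by
            rw [Real.exp_lt_one_iff]
            have : (0:ℝ) < (r:ℝ) + 1 := by positivity
            nlinarith
          intro h
          have : ((Real.exp (L * (r+1)) : ℝ) : ℂ) = 1 := by
            have := sub_eq_zero.mp h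
            linear_combination -this
          have : Real.exp (L * (r+1)) = 1 := by exact_mod_cast this
          linarith
        have hcC : ContinuousAt (fun s : ℂ =>
            ((ascPochhammer ℂ (r+1)).eval s / ((r+1).factorial : ℂ)) *
            (Complex.exp ((L:ℂ)*(s + ((r:ℂ)+1) - 1)) /
              (1 - Complex.exp ((L:ℂ)*(s + ((r:ℂ)+1) - 1))))) 1 := by
          apply ContinuousAt.mul
          · exact ((Polynomial.continuous _).div_const _).continuousAt
          · exact (hEc.continuousAt).div ((continuous_const.sub hEc).continuousAt) hden
        have hsub : Tendsto (fun s : ℂ => s - 1) (nhdsWithin 1 {1}ᶜ) (nhds 0) := by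
          have : Continuous fun s : ℂ => s - 1 := by continuity
          have := this.tendsto 1
          simp only [sub_self] at this
          exact this.mono_left nhdsWithin_le_nhds
        have := hsub.mul (hcC.tendsto.mono_left nhdsWithin_le_nhds)
        rw [zero_mul] at this
        refine this.congr fun s => ?_
        simp only [hf, hcpow]
        push_cast
        ring_nf
  -- the dominating bound
  have habsL : 0 < |L| := abs_pos.mpr hLne
  have hsqlt : Real.sqrt q < 1 := by
    rw [show (1:ℝ) = Real.sqrt 1 by simp]
    exact Real.sqrt_lt_sqrt hq0.le hq1
  have hsqpos : 0 < 1 - Real.sqrt q := by linarith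
  set K : ℝ := 2/(q*|L|) + 1/(q*(1 - Real.sqrt q)) with hK
  set δ : ℝ := min (1/2) (1/(2*|L|)) with hδ
  have hδpos : 0 < δ := by
    apply lt_min (by norm_num)
    positivity
  have h_sum : Summable (fun r : ℕ => K * (((r:ℝ)+1) * q^r)) := by
    apply Summable.mul_left
    have h1 : Summable (fun r : ℕ => (r:ℝ)^1 * q^r) :=
      summable_pow_mul_geometric_of_norm_lt_one 1
        (by rw [Real.norm_eq_abs, abs_of_pos hq0]; exact hq1)
    have h2 : Summable (fun r : ℕ => q^r) := summable_geometric_of_lt_one hq0.le hq1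
    have := h1.add h2
    refine this.congr fun r => by push_cast; ring
  have h_bound : ∀ᶠ s in nhdsWithin 1 {1}ᶜ, ∀ r : ℕ,
      ‖f s r‖ ≤ K * (((r:ℝ)+1) * q^r) := by
    filter_upwards [mem_nhdsWithin_of_mem_nhds (Metric.closedBall_mem_nhds (1:ℂ) hδpos),
      self_mem_nhdsWithin] with s hsball hsne
    have hsne' : s ≠ 1 := hsne
    have hs1 : ‖s - 1‖ ≤ δ := by
      rw [Metric.mem_closedBall, dist_eq_norm] at hsball
      exact hsball
    have hsd : ‖s - 1‖ ≤ 1/2 := hs1.trans (min_le_left _ _)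
    have hsL : |L| * ‖s - 1‖ ≤ 1/2 := by
      have h' : ‖s-1‖ ≤ 1/(2*|L|) := hs1.trans (min_le_right _ _)
      calc |L| * ‖s-1‖ ≤ |L| * (1/(2*|L|)) := by
            exact mul_le_mul_of_nonneg_left h' habsL.le
        _ = 1/2 := by field_simp
    have hre : |s.re - 1| ≤ 1/2 := by
      have := Complex.abs_re_le_norm (s - 1)
      simp only [Complex.sub_re, Complex.one_re] at this
      linarith
    have hsn0 : (0:ℝ) < ‖s - 1‖ := by
      rw [norm_pos_iff]
      exact sub_ne_zero.2 hsne'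
    intro r
    match r with
    | 0 =>
        set z : ℂ := (L:ℂ) * (s - 1) with hz
        have hzn : ‖z‖ = |L| * ‖s-1‖ := by
          rw [hz, norm_mul, Complex.norm_real, Real.norm_eq_abs]
        have hzpos : 0 < ‖z‖ := by
          rw [hzn]; positivity
        have hz1 : ‖z‖ ≤ 1 := by rw [hzn]; linarith
        have hlow : ‖z‖/2 ≤ ‖1 - Complex.exp z‖ := by
          have h5 : ‖Complex.exp z - 1 - z‖ ≤ ‖z‖^2 := by
            have := Complex.norm_exp_sub_one_sub_id_le
              (x := z) hz1
            simpa using this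
          have h6 : ‖z‖ ≤ ‖Complex.exp z - 1‖ + ‖Complex.exp z - 1 - z‖ := by
            calc ‖z‖ = ‖(Complex.exp z - 1) - (Complex.exp z - 1 - z)‖ := by ring_nf
              _ ≤ ‖Complex.exp z - 1‖ + ‖Complex.exp z - 1 - z‖ := norm_sub_le _ _
          have h7 : ‖z‖^2 ≤ ‖z‖ * (1/2) := by nlinarith
          have h8 : ‖1 - Complex.exp z‖ = ‖Complex.exp z - 1‖ := norm_sub_rev _ _
          rw [h8]
          nlinarith
        have hEub : ‖Complex.exp z‖ ≤ q⁻¹ := by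
          rw [Complex.norm_exp]
          have hzre : z.re = L * (s.re - 1) := by
            rw [hz]
            simp [Complex.ofReal_mul, Complex.mul_re, Complex.sub_re]
          have : z.re ≤ |L| := by
            rw [hzre]
            calc L * (s.re - 1) ≤ |L * (s.re - 1)| := le_abs_self _
              _ = |L| * |s.re - 1| := abs_mul _ _
              _ ≤ |L| * 1 := by
                  exact mul_le_mul_of_nonneg_left (by linarith) habsL.le
              _ = |L| := mul_one _
          calc Real.exp z.re ≤ Real.exp |L| := Real.exp_le_exp.2 this
            _ = q⁻¹ := by
                rw [abs_of_neg hLneg, hLdef, Real.exp_neg, Real.exp_log hq0]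
        have heq : f s 0 = (s-1) * (Complex.exp z / (1 - Complex.exp z)) := by
          simp only [hf, hcpow, ascPochhammer_zero, Polynomial.eval_one, Nat.factorial_zero,
            Nat.cast_one, Nat.cast_zero, add_zero, div_one, one_mul, hz]
        rw [heq, norm_mul, norm_div]
        have step : ‖Complex.exp z‖ / ‖1 - Complex.exp z‖ ≤ q⁻¹ / (‖z‖/2) := by
          exact div_le_div₀ (by positivity) hEub (by positivity) hlow
        calc ‖s-1‖ * (‖Complex.exp z‖ / ‖1 - Complex.exp z‖)
            ≤ ‖s-1‖ * (q⁻¹ / (‖z‖/2)) := by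
              exact mul_le_mul_of_nonneg_left step (norm_nonneg _)
          _ = 2/(q*|L|) := by
              rw [hzn]
              rw [show ‖s-1‖ * (q⁻¹ / (|L| * ‖s-1‖ / 2)) =
                (‖s-1‖ / ‖s-1‖) * (2 * q⁻¹ / |L|) by ring]
              rw [div_self hsn0.ne', one_mul]
              rw [inv_eq_one_div]
              ring
          _ ≤ K * (((0:ℕ):ℝ)+1) * q^(0:ℕ) := by
              rw [hK]
              simp only [Nat.cast_zero, zero_add, mul_one, pow_zero]
              have : 0 < 1/(q*(1-Real.sqrt q)) := by positivity
              linarith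
          _ = K * ((((0:ℕ):ℝ)+1) * q^(0:ℕ)) := by ring
    | (r + 1) =>
        have hsnorm : ‖s‖ ≤ 2 := by
          have h := norm_add_le (s - 1) (1 : ℂ)
          rw [sub_add_cancel, norm_one] at h
          linarith
        have hP : ‖(ascPochhammer ℂ (r+1)).eval s‖ ≤ ((r+2).factorial : ℝ) := by
          exact poch_norm_le s hsnorm (r+1)
        have hPf : ‖(ascPochhammer ℂ (r+1)).eval s‖ / (((r+1).factorial : ℕ) : ℝ)
            ≤ (r:ℝ) + 2 := by
          rw [div_le_iff₀ (by positivity)]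
          calc ‖(ascPochhammer ℂ (r+1)).eval s‖ ≤ ((r+2).factorial : ℝ) := hP
            _ = ((r:ℝ)+2) * ((r+1).factorial : ℝ) := by
                rw [show r + 2 = (r+1)+1 by ring, Nat.factorial_succ]
                push_cast
                ring
        set y : ℂ := s + ((r:ℂ)+1) - 1 with hy
        have hyre : y.re = s.re + r := by
          rw [hy]
          simp only [Complex.add_re, Complex.sub_re, Complex.one_re, Complex.natCast_re]
          ring
        have hQnorm : ‖(q:ℂ) ^ y‖ = q ^ y.re := by
          rw [Complex.norm_cpow_eq_rpow_re_of_pos hq0]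
        have hsre : 1/2 ≤ s.re := by
          have := abs_le.mp hre
          linarith [this.1]
        have hQ1 : ‖(q:ℂ) ^ y‖ ≤ q ^ r := by
          rw [hQnorm, ← Real.rpow_natCast q r]
          apply Real.rpow_le_rpow_of_exponent_ge hq0 hq1.le
          rw [hyre]
          linarith
        have hQ2 : ‖(q:ℂ) ^ y‖ ≤ Real.sqrt q := by
          rw [hQnorm, Real.sqrt_eq_rpow]
          apply Real.rpow_le_rpow_of_exponent_ge hq0 hq1.le
          rw [hyre]
          have : (0:ℝ) ≤ r := Nat.cast_nonneg r
          linarith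
        have hden : 1 - Real.sqrt q ≤ ‖1 - (q:ℂ) ^ y‖ := by
          have := norm_sub_norm_le (1:ℂ) ((q:ℂ) ^ y)
          simp only [norm_one] at this
          linarith
        have hQf : ‖(q:ℂ) ^ y‖ / ‖1 - (q:ℂ) ^ y‖ ≤ q ^ r / (1 - Real.sqrt q) :=
          div_le_div₀ (by positivity) hQ1 hsqpos hden
        have heq : ‖f s (r+1)‖ = ‖s-1‖ * (‖(ascPochhammer ℂ (r+1)).eval s‖
            / (((r+1).factorial : ℕ) : ℝ) * (‖(q:ℂ) ^ y‖ / ‖1 - (q:ℂ) ^ y‖)) := by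
          simp only [hf, hy]
          push_cast
          rw [norm_mul, norm_mul, norm_div, norm_div, Complex.norm_natCast]
        rw [heq]
        have hstep : ‖(ascPochhammer ℂ (r+1)).eval s‖ / (((r+1).factorial : ℕ) : ℝ)
            * (‖(q:ℂ) ^ y‖ / ‖1 - (q:ℂ) ^ y‖)
            ≤ ((r:ℝ) + 2) * (q ^ r / (1 - Real.sqrt q)) :=
          mul_le_mul hPf hQf (by positivity) (by positivity)
        calc ‖s-1‖ * (‖(ascPochhammer ℂ (r+1)).eval s‖ / (((r+1).factorial : ℕ) : ℝ)
              * (‖(q:ℂ) ^ y‖ / ‖1 - (q:ℂ) ^ y‖))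
            ≤ 1 * (((r:ℝ) + 2) * (q ^ r / (1 - Real.sqrt q))) := by
              apply mul_le_mul (by linarith) hstep ?_ (by norm_num)
              positivity
          _ ≤ K * ((((r+1:ℕ):ℝ)+1) * q^(r+1)) := by
              rw [one_mul, hK]
              have hexp : K * ((((r+1:ℕ):ℝ)+1) * q^(r+1)) =
                  (2/|L|) * (((r:ℝ)+2) * q^r) + ((r:ℝ)+2) * (q^r / (1 - Real.sqrt q)) := by
                rw [hK, pow_succ]
                push_cast
                field_simp
                ring
              rw [← hK, hexp]
              have h9 : 0 ≤ (2/|L|) * (((r:ℝ)+2) * q^r) := by positivity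
              linarith
  have hten := tendsto_tsum_of_dominated_convergence h_sum h_lim h_bound
  have htsumg : ∑' r, g r = -((L:ℂ))⁻¹ := by
    rw [hg]
    exact tsum_ite_eq 0 _
  rw [htsumg] at hten
  have h1q : (1 : ℂ) - q ≠ 0 := by
    rw [sub_ne_zero]
    intro h
    have : (1:ℝ) = q := by exact_mod_cast h
    linarith
  haveI : NeZero ((1:ℂ) - q) := ⟨h1q⟩
  have hccc : Tendsto (fun s : ℂ => ((1:ℂ) - q) ^ s) (nhdsWithin 1 {1}ᶜ)
      (nhds ((1:ℂ) - q)) := by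
    have h := (continuous_const_cpow ((1:ℂ) - q)).tendsto 1
    rw [Complex.cpow_one] at h
    exact h.mono_left nhdsWithin_le_nhds
  have final := hccc.mul hten
  have hval : ((q:ℂ) - 1) / (L : ℂ) = ((1:ℂ) - q) * -((L:ℂ))⁻¹ := by
    rw [div_eq_mul_inv]
    ring
  rw [show ((Real.log q : ℂ)) = (L : ℂ) from rfl, hval]
  refine final.congr fun s => ?_
  rw [zetaQc]
  simp only [hf]
  rw [tsum_mul_left]
  ring
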